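/- arXiv:1303.5964 — 4 statements merged into one kernel-verified Lean document; each statement's English description precedes it below -/
import Mathlib

section
/- Let X : [0,∞) → ℝ be a nondecreasing right-continuous function with X(0) = 0, let Y(t) = X(t) − t, and let z ≥ 0. Suppose Z : [0,∞) → ℝ is right-continuous, nonnegative, and satisfies Z(t) = z + Y(t) + ∫_0^t 1{Z(s) = 0} ds for every t ≥ 0 (Lebesgue integral of the indicator). Then for every t ≥ 0, Z(t) = z + Y(t) + max(0, −(inf_{s∈[0,t]} Y(s) + z)); in particular the integral equation has a unique nonnegative right-continuous solution. -/
open Set MeasureTheory Filter Topology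

lemma measurable_of_rightCont (Z : ℝ → ℝ)
    (hZrc : ∀ t : ℝ, 0 ≤ t → ContinuousWithinAt Z (Ici t) t) :
    Measurable (fun s : ℝ => Z (max s 0)) := by
  have hmeas : ∀ n : ℕ, Measurable (fun s : ℝ =>
      Z (max ((⌈s * 2 ^ n⌉ : ℝ) / 2 ^ n) 0)) := by
    intro n
    have h0 : (fun s : ℝ => Z (max ((⌈s * 2 ^ n⌉ : ℝ) / 2 ^ n) 0))
        = (fun k : ℤ => Z (max ((k : ℝ) / 2 ^ n) 0)) ∘ (fun s : ℝ => ⌈s * 2 ^ n⌉) := rfl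
    rw [h0]
    have h1 : Measurable (fun s : ℝ => (⌈s * 2 ^ n⌉ : ℤ)) :=
      Int.measurable_ceil.comp (measurable_id.mul_const _)
    exact Measurable.comp (fun _ _ => trivial) h1
  apply measurable_of_tendsto_metrizable hmeas
  rw [tendsto_pi_nhds]
  intro s
  have h2n : ∀ n : ℕ, (0:ℝ) < 2 ^ n := fun n => by positivity
  have hge : ∀ n : ℕ, s ≤ (⌈s * 2 ^ n⌉ : ℝ) / 2 ^ n := by
    intro n
    rw [le_div_iff₀ (h2n n)]
    exact Int.le_ceil _
  have hle : ∀ n : ℕ, (⌈s * 2 ^ n⌉ : ℝ) / 2 ^ n ≤ s + (2 ^ n)⁻¹ := by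
    intro n
    rw [div_le_iff₀ (h2n n)]
    calc ((⌈s * 2 ^ n⌉ : ℝ)) ≤ s * 2 ^ n + 1 := (Int.ceil_lt_add_one (s * 2 ^ n)).le
      _ = (s + (2 ^ n)⁻¹) * 2 ^ n := by field_simp
  have htend : Tendsto (fun n : ℕ => (⌈s * 2 ^ n⌉ : ℝ) / 2 ^ n) atTop (𝓝 s) := by
    apply tendsto_of_tendsto_of_tendsto_of_le_of_le (g := fun _ => s)
      (h := fun n : ℕ => s + (2 ^ n)⁻¹) tendsto_const_nhds ?_ hge hle
    have : Tendsto (fun n : ℕ => ((2:ℝ) ^ n)⁻¹) atTop (𝓝 0) := by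
      simpa using tendsto_pow_atTop_nhds_zero_of_lt_one (by norm_num : (0:ℝ) ≤ 2⁻¹)
        (by norm_num : (2:ℝ)⁻¹ < 1) |>.congr (fun n => by rw [inv_pow])
    simpa using tendsto_const_nhds.add this
  have htend' : Tendsto (fun n : ℕ => max ((⌈s * 2 ^ n⌉ : ℝ) / 2 ^ n) 0) atTop
      (𝓝[Ici (max s 0)] (max s 0)) := by
    rw [tendsto_nhdsWithin_iff]
    constructor
    · exact (continuous_max.comp (continuous_id.prodMk continuous_const)).continuousAt.tendsto.comp htend
    · exact Eventually.of_forall fun n => max_le_max (hge n) le_rfl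
  exact ((hZrc (max s 0) (le_max_right _ _)).tendsto).comp htend'

/-- uniqueness part of Proposition 1, pathwise form.
Any nonnegative right-continuous solution of the storage integral equation
`Z t = z + Y t + ∫_0^t 1{Z s = 0} ds`, with `Y t = X t - t` for a nondecreasing
right-continuous inflow `X` with `X 0 = 0` and initial level `z ≥ 0`, is given
by the reflection formula. -/
theorem stmt_1 (X : ℝ → ℝ)
    (hmono : ∀ ⦃s t : ℝ⦄, 0 ≤ s → s ≤ t → X s ≤ X t)
    (hrc : ∀ t : ℝ, 0 ≤ t → ContinuousWithinAt X (Ici t) t)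
    (hX0 : X 0 = 0)
    (Y : ℝ → ℝ) (hY : ∀ t, Y t = X t - t)
    (z : ℝ) (hz : 0 ≤ z)
    (Z : ℝ → ℝ)
    (hZrc : ∀ t : ℝ, 0 ≤ t → ContinuousWithinAt Z (Ici t) t)
    (hZnn : ∀ t : ℝ, 0 ≤ t → 0 ≤ Z t)
    (hZeq : ∀ t : ℝ, 0 ≤ t →
      Z t = z + Y t +
        ∫ s in Icc (0 : ℝ) t, ({s : ℝ | Z s = 0}).indicator (fun _ => (1 : ℝ)) s) :
    ∀ t : ℝ, 0 ≤ t → Z t = z + Y t + max 0 (-(sInf (Y '' Icc 0 t) + z)) := by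
  intro t ht
  set c := max 0 (-(sInf (Y '' Icc 0 t) + z)) with hc
  have hA' : MeasurableSet {s : ℝ | Z (max s 0) = 0} :=
    measurable_of_rightCont Z hZrc (measurableSet_singleton 0)
  set A : Set ℝ := {s : ℝ | Z (max s 0) = 0} with hA
  set L : ℝ → ℝ := fun u => (volume (A ∩ Icc 0 u)).toReal with hL
  -- rewrite the integral as L
  have hint : ∀ u : ℝ, 0 ≤ u →
      (∫ s in Icc (0:ℝ) u, ({s : ℝ | Z s = 0}).indicator (fun _ => (1:ℝ)) s) = L u := by
    intro u hu
    rw [setIntegral_congr_fun measurableSet_Icc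
      (g := A.indicator (fun _ => (1:ℝ)))
      (fun s hs => by
        have hms : max s 0 = s := max_eq_left hs.1
        simp [Set.indicator_apply, hA, hms])]
    rw [setIntegral_indicator hA', setIntegral_const]
    simp [hL, inter_comm]
    rfl
  have hZL : ∀ u : ℝ, 0 ≤ u → Z u = z + Y u + L u := by
    intro u hu; rw [hZeq u hu, hint u hu]
  -- finiteness
  have hfin : ∀ (B : Set ℝ) (u v : ℝ), B ⊆ Icc u v → volume B ≠ ⊤ := by
    intro B u v hB
    exact ((measure_mono hB).trans_lt measure_Icc_lt_top).ne
  -- splitting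
  have hLsplit : ∀ a v : ℝ, 0 ≤ a → a ≤ v →
      L v = L a + (volume (A ∩ Ioc a v)).toReal := by
    intro a v h0a hav
    have hset : A ∩ Icc 0 v = (A ∩ Icc 0 a) ∪ (A ∩ Ioc a v) := by
      rw [← inter_union_distrib_left, Icc_union_Ioc_eq_Icc h0a hav]
    have hdisj : Disjoint (A ∩ Icc 0 a) (A ∩ Ioc a v) := by
      refine Set.disjoint_left.2 ?_
      rintro x ⟨-, -, hxa⟩ ⟨-, hax, -⟩
      exact absurd hxa (not_le.2 hax)
    have hmu : volume (A ∩ Icc 0 v) = volume (A ∩ Icc 0 a) + volume (A ∩ Ioc a v) := by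
      rw [hset, measure_union hdisj (hA'.inter measurableSet_Ioc)]
    simp only [hL]
    rw [hmu, ENNReal.toReal_add (hfin _ 0 a inter_subset_right)
      (hfin _ a v (inter_subset_right.trans Ioc_subset_Icc_self))]
  -- Lipschitz-type bound
  have hLlip : ∀ a v : ℝ, 0 ≤ a → a ≤ v → L v ≤ L a + (v - a) := by
    intro a v h0a hav
    rw [hLsplit a v h0a hav]
    have h1 : volume (A ∩ Ioc a v) ≤ ENNReal.ofReal (v - a) := by
      rw [← Real.volume_Ioc]; exact measure_mono inter_subset_right
    have h2 : (volume (A ∩ Ioc a v)).toReal ≤ v - a := by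
      have h3 := ENNReal.toReal_mono ENNReal.ofReal_ne_top h1
      rwa [ENNReal.toReal_ofReal (by linarith)] at h3
    linarith
  have hLmono : ∀ u v : ℝ, u ≤ v → L u ≤ L v := by
    intro u v huv
    exact ENNReal.toReal_mono (hfin _ 0 v inter_subset_right)
      (measure_mono (inter_subset_inter_right _ (Icc_subset_Icc_right huv)))
  have hLnn : ∀ u : ℝ, 0 ≤ L u := fun u => ENNReal.toReal_nonneg
  -- bounded below image
  have hne : (Y '' Icc 0 t).Nonempty := ⟨Y 0, mem_image_of_mem _ ⟨le_rfl, ht⟩⟩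
  have hbdd : BddBelow (Y '' Icc 0 t) := by
    refine ⟨-t, ?_⟩
    rintro y ⟨s, hs, rfl⟩
    have hXs : (0:ℝ) ≤ X s := hX0 ▸ hmono (le_refl 0) hs.1
    rw [hY]; linarith [hs.2]
  have hcnn : (0:ℝ) ≤ c := le_max_left _ _
  have hcge : ∀ s : ℝ, 0 ≤ s → s ≤ t → -(z + Y s) ≤ c := by
    intro s hs0 hst
    have h1 : sInf (Y '' Icc 0 t) ≤ Y s := csInf_le hbdd (mem_image_of_mem _ ⟨hs0, hst⟩)
    have h2 : -(sInf (Y '' Icc 0 t) + z) ≤ c := le_max_right _ _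
    linarith
  -- lower bound : c ≤ L t
  have hLt_ge : c ≤ L t := by
    have h1 : ∀ s : ℝ, 0 ≤ s → s ≤ t → -(z + Y s) ≤ L t := by
      intro s hs0 hst
      have hZs := hZnn s hs0
      rw [hZL s hs0] at hZs
      have := hLmono s t hst
      linarith
    have h2 : -z - L t ≤ sInf (Y '' Icc 0 t) := by
      apply le_csInf hne
      rintro y ⟨s, hs, rfl⟩
      have := h1 s hs.1 hs.2
      linarith
    rw [hc]
    exact max_le (hLnn t) (by linarith)
  -- upper bound : L t ≤ c, via the sup argument
  have hL0 : L 0 = 0 := by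
    have h0 : volume (A ∩ ({0} : Set ℝ)) = 0 :=
      measure_mono_null inter_subset_right Real.volume_singleton
    simp [hL, Icc_self, h0]
  set S : Set ℝ := {u | u ∈ Icc (0:ℝ) t ∧ L u ≤ c} with hS
  have h0S : (0:ℝ) ∈ S := ⟨⟨le_rfl, ht⟩, by rw [hL0]; exact hcnn⟩
  have hSne : S.Nonempty := ⟨0, h0S⟩
  have hSbdd : BddAbove S := ⟨t, fun u hu => hu.1.2⟩
  set a := sSup S with ha
  have ha0 : 0 ≤ a := le_csSup hSbdd h0S
  have hat : a ≤ t := csSup_le hSne (fun u hu => hu.1.2)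
  have hLa : L a ≤ c := by
    by_contra h
    push_neg at h
    obtain ⟨s, hsS, hs⟩ := exists_lt_of_lt_csSup hSne
      (show a - (L a - c) < a by linarith)
    have hsa : s ≤ a := le_csSup hSbdd hsS
    have hlip := hLlip s a hsS.1.1 hsa
    linarith [hsS.2]
  have hkey : ∀ s : ℝ, a < s → s ≤ t → Z s ≠ 0 := by
    intro s has hst h0
    have hs0 : 0 ≤ s := le_trans ha0 has.le
    have hLs : c < L s := by
      by_contra hcon
      push_neg at hcon
      exact absurd (le_csSup hSbdd ⟨⟨hs0, hst⟩, hcon⟩) (not_le.2 has)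
    have hYs := hcge s hs0 hst
    have hZs := hZL s hs0
    rw [h0] at hZs
    linarith
  have hLt_le : L t ≤ c := by
    have hzero : volume (A ∩ Ioc a t) = 0 := by
      have hempty : A ∩ Ioc a t = ∅ := by
        ext s
        simp only [mem_inter_iff, mem_Ioc, mem_empty_iff_false, iff_false, not_and, hA,
          mem_setOf_eq, and_imp]
        intro hsA has hst
        have hs0 : 0 ≤ s := le_trans ha0 has.le
        rw [max_eq_left hs0] at hsA
        exact hkey s has hst hsA
      rw [hempty]; exact measure_empty
    rw [hLsplit a t ha0 hat, hzero]
    simpa using hLa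
  have : L t = c := le_antisymm hLt_le hLt_ge
  rw [hZL t ht, this]
end

section
/- Let X : [0,∞) → ℝ be a nondecreasing right-continuous function with X(0) = 0, let Y(t) = X(t) − t, let z ≥ 0, and let Z : [0,∞) → ℝ be right-continuous, nonnegative, and satisfy Z(t) = z + Y(t) + ∫_0^t 1{Z(s) = 0} ds for all t ≥ 0. Then for every 0 < τ ≤ t one has Z(t) ≥ Y(t) − Y(τ⁻), where Y(τ⁻) denotes the left limit of Y at τ (which exists since X is nondecreasing), and moreover Z(t) ≥ Y(t). -/
open Set MeasureTheory Filter

/-- A function right-continuous at every point of `ℝ` is measurable. -/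
lemma measurable_of_rc (W : ℝ → ℝ) (h : ∀ s : ℝ, ContinuousWithinAt W (Ici s) s) :
    Measurable W := by
  have key : ∀ s : ℝ, Tendsto (fun n : ℕ => W ((⌈(n + 1 : ℝ) * s⌉ : ℝ) / (n + 1)))
      atTop (nhds (W s)) := by
    intro s
    have hpos : ∀ n : ℕ, (0 : ℝ) < (n + 1 : ℝ) := fun n => by positivity
    have hge : ∀ n : ℕ, s ≤ (⌈(n + 1 : ℝ) * s⌉ : ℝ) / (n + 1) := by
      intro n
      rw [le_div_iff₀ (hpos n)]
      nlinarith [Int.le_ceil ((n + 1 : ℝ) * s)]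
    have hlt : ∀ n : ℕ, (⌈(n + 1 : ℝ) * s⌉ : ℝ) / (n + 1) ≤ s + 1 / (n + 1) := by
      intro n
      rw [div_le_iff₀ (hpos n)]
      have h1 := (Int.ceil_lt_add_one ((n + 1 : ℝ) * s)).le
      have h2 : (1 / (n + 1 : ℝ)) * (n + 1) = 1 := by
        field_simp
      nlinarith
    have htend : Tendsto (fun n : ℕ => (⌈(n + 1 : ℝ) * s⌉ : ℝ) / (n + 1)) atTop (nhds s) := by
      have h1 : Tendsto (fun n : ℕ => s + 1 / (n + 1 : ℝ)) atTop (nhds (s + 0)) :=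
        tendsto_const_nhds.add tendsto_one_div_add_atTop_nhds_zero_nat
      rw [add_zero] at h1
      exact tendsto_of_tendsto_of_tendsto_of_le_of_le tendsto_const_nhds h1 hge hlt
    exact (h s).tendsto.comp (tendsto_nhdsWithin_iff.2 ⟨htend, Eventually.of_forall hge⟩)
  apply measurable_of_tendsto_metrizable (f := fun n s => W ((⌈(n + 1 : ℝ) * s⌉ : ℝ) / (n + 1)))
  · intro n
    exact (measurable_from_top (f := fun k : ℤ => W ((k : ℝ) / (n + 1)))).comp
      (Measurable.ceil ((measurable_const.mul measurable_id) : Measurable fun s : ℝ => (n+1:ℝ)*s))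
  · exact tendsto_pi_nhds.2 key

/-- key inequality in the proof of Proposition 1.
If `Z` is a nonnegative right-continuous solution of the storage integral
equation with `Y t = X t - t`, `X` nondecreasing right-continuous, `X 0 = 0`,
then for every `0 < τ ≤ t` and every left limit value `L` of `Y` at `τ` one has
`Z t ≥ Y t - L`; moreover `Z t ≥ Y t`. -/
theorem stmt_2 (X : ℝ → ℝ)
    (hmono : ∀ ⦃s t : ℝ⦄, 0 ≤ s → s ≤ t → X s ≤ X t)
    (hrc : ∀ t : ℝ, 0 ≤ t → ContinuousWithinAt X (Ici t) t)
    (hX0 : X 0 = 0)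
    (Y : ℝ → ℝ) (hY : ∀ t, Y t = X t - t)
    (z : ℝ) (hz : 0 ≤ z)
    (Z : ℝ → ℝ)
    (hZrc : ∀ t : ℝ, 0 ≤ t → ContinuousWithinAt Z (Ici t) t)
    (hZnn : ∀ t : ℝ, 0 ≤ t → 0 ≤ Z t)
    (hZeq : ∀ t : ℝ, 0 ≤ t →
      Z t = z + Y t +
        ∫ s in Icc (0 : ℝ) t, ({s : ℝ | Z s = 0}).indicator (fun _ => (1 : ℝ)) s) :
    ∀ t : ℝ, 0 ≤ t →
      ((∀ τ : ℝ, 0 < τ → τ ≤ t → ∀ L : ℝ,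
          Tendsto Y (nhdsWithin τ (Iio τ)) (nhds L) → Y t - L ≤ Z t) ∧
        Y t ≤ Z t) := by
  -- measurable modification of Z
  set W : ℝ → ℝ := fun s => Z (max s 0) with hW
  have hWrc : ∀ s : ℝ, ContinuousWithinAt W (Ici s) s := by
    intro s
    rcases le_or_gt 0 s with hs | hs
    · refine (hZrc s hs).congr (fun x hx => ?_) ?_
      · simp [hW, max_eq_left (le_trans hs hx)]
      · simp [hW, max_eq_left hs]
    · have : (fun _ : ℝ => Z 0) =ᶠ[nhdsWithin s (Ici s)] W := by
        filter_upwards [nhdsWithin_le_nhds (Iio_mem_nhds hs)] with x hx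
        simp only [hW]
        rw [max_eq_right (mem_Iio.1 hx).le]
      exact (continuousWithinAt_const).congr_of_eventuallyEq this.symm
        (by simp [hW, max_eq_right hs.le])
  have hWmeas : Measurable W := measurable_of_rc W hWrc
  have hSmeas : MeasurableSet {s : ℝ | W s = 0} := hWmeas (measurableSet_singleton 0)
  -- the integrand
  set g : ℝ → ℝ := ({s : ℝ | W s = 0}).indicator (fun _ => (1 : ℝ)) with hg
  have hg_eq : ∀ s : ℝ, 0 ≤ s →
      ({s : ℝ | Z s = 0}).indicator (fun _ => (1 : ℝ)) s = g s := by
    intro s hs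
    have : (max s 0) = s := max_eq_left hs
    simp only [hg, indicator]
    simp [hW, this]
  have hg_nn : ∀ s, 0 ≤ g s := fun s => Set.indicator_nonneg (fun _ _ => zero_le_one) s
  have hZeq' : ∀ t : ℝ, 0 ≤ t → Z t = z + Y t + ∫ s in Icc (0 : ℝ) t, g s := by
    intro t ht
    rw [hZeq t ht]
    congr 1
    exact setIntegral_congr_fun measurableSet_Icc (fun s hs => hg_eq s hs.1)
  have hg_int : ∀ t : ℝ, IntegrableOn g (Icc (0 : ℝ) t) := by
    intro t
    exact (integrableOn_const measure_Icc_lt_top.ne).indicator hSmeas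
  intro t ht
  constructor
  · intro τ hτ hτt L hL
    -- for τ' ∈ Ioo 0 τ, Y t - Y τ' ≤ Z t
    have key : ∀ τ' ∈ Ioo (0 : ℝ) τ, Y t - Y τ' ≤ Z t := by
      intro τ' hτ'
      have h0τ' : (0 : ℝ) ≤ τ' := hτ'.1.le
      have hτ't : τ' ≤ t := le_trans hτ'.2.le hτt
      have hmonoI : ∫ s in Icc (0 : ℝ) τ', g s ≤ ∫ s in Icc (0 : ℝ) t, g s := by
        apply setIntegral_mono_set (hg_int t) (Eventually.of_forall hg_nn)
        exact HasSubset.Subset.eventuallyLE (Icc_subset_Icc le_rfl hτ't)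
      have h1 := hZeq' t ht
      have h2 := hZeq' τ' h0τ'
      have h3 := hZnn τ' h0τ'
      nlinarith [hmonoI]
    have hev : ∀ᶠ τ' in nhdsWithin τ (Iio τ), Y t - Y τ' ≤ Z t := by
      filter_upwards [nhdsWithin_le_nhds (Ioi_mem_nhds hτ), self_mem_nhdsWithin]
        with τ' h1 h2
      exact key τ' ⟨h1, h2⟩
    have htend : Tendsto (fun τ' => Y t - Y τ') (nhdsWithin τ (Iio τ)) (nhds (Y t - L)) :=
      tendsto_const_nhds.sub hL
    exact le_of_tendsto htend hev
  · have hInn : 0 ≤ ∫ s in Icc (0 : ℝ) t, g s :=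
      integral_nonneg hg_nn
    have := hZeq' t ht
    linarith
end

section
/- Let X : [0,∞) → ℝ be a nondecreasing continuous function with X(0) = 0, let Y(t) = t − X(t), and let z ≥ 0. Suppose Z : [0,∞) → ℝ is right-continuous, nonnegative, and satisfies Z(t) = z + Y(t) + ∫_0^t 1{Z(s) = 0} dX(s) for every t ≥ 0, where the integral is with respect to the Lebesgue–Stieltjes measure induced by X. Then for every t ≥ 0, Z(t) = z + Y(t) + max(0, −(inf_{s∈[0,t]} Y(s) + z)); in particular the integral equation has a unique nonnegative right-continuous solution. -/
open Set MeasureTheory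

/-- The Stieltjes function on `ℝ` induced by a nondecreasing continuous
function `X` on `[0,∞)` (extended by the constant `X 0` to the left of `0`);
its associated measure is the Lebesgue–Stieltjes measure induced by `X`. -/
noncomputable def stieltjesOfInflow (X : ℝ → ℝ)
    (hmono : ∀ ⦃s t : ℝ⦄, 0 ≤ s → s ≤ t → X s ≤ X t)
    (hcont : ContinuousOn X (Ici 0)) : StieltjesFunction ℝ where
  toFun x := X (max x 0)
  mono' := fun a b hab => hmono (le_max_right a 0) (max_le_max hab le_rfl)
  right_continuous' := fun x => by
    have h1 : ContinuousWithinAt X (Ici 0) (max x 0) := hcont _ (le_max_right x 0)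
    have h2 : ContinuousWithinAt (fun y : ℝ => max y 0) (Ici x) x :=
      (continuous_id.max continuous_const).continuousWithinAt
    exact ContinuousWithinAt.comp (g := X) (f := fun y : ℝ => max y 0)
      (s := Ici x) (t := Ici 0) (x := x) h1 h2 fun y _ => le_max_right y 0

/-- uniqueness part of Proposition 2, pathwise form.
Any nonnegative right-continuous solution of the inventory integral equation
`Z t = z + Y t + ∫_0^t 1{Z s = 0} dX s` (Lebesgue–Stieltjes integral with
respect to the nondecreasing continuous outflow `X` with `X 0 = 0`), where
`Y t = t - X t` and `z ≥ 0`, is given by the reflection formula. -/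
theorem stmt_7 (X : ℝ → ℝ)
    (hmono : ∀ ⦃s t : ℝ⦄, 0 ≤ s → s ≤ t → X s ≤ X t)
    (hcont : ContinuousOn X (Ici 0))
    (hX0 : X 0 = 0)
    (Y : ℝ → ℝ) (hY : ∀ t, Y t = t - X t)
    (z : ℝ) (hz : 0 ≤ z)
    (Z : ℝ → ℝ)
    (hZrc : ∀ t : ℝ, 0 ≤ t → ContinuousWithinAt Z (Ici t) t)
    (hZnn : ∀ t : ℝ, 0 ≤ t → 0 ≤ Z t)
    (hZeq : ∀ t : ℝ, 0 ≤ t →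
      Z t = z + Y t +
        ∫ s in Icc (0 : ℝ) t, ({s : ℝ | Z s = 0}).indicator (fun _ => (1 : ℝ)) s
          ∂(stieltjesOfInflow X hmono hcont).measure) :
    ∀ t : ℝ, 0 ≤ t → Z t = z + Y t + max 0 (-(sInf (Y '' Icc 0 t) + z)) := by

  intro t ht
  set S := stieltjesOfInflow X hmono hcont with hS
  set μ := S.measure with hμ
  -- A measurable version of Z on [0, ∞)
  have hW : Measurable (fun s : ℝ => Z (max s 0)) := by
    have hmeas : ∀ n : ℕ, Measurable
        (fun s : ℝ => Z (((⌊max s 0 * (n + 1 : ℝ)⌋ : ℝ) + 1) / (n + 1 : ℝ))) := by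
      intro n
      have h1 : Measurable fun s : ℝ => (⌊max s 0 * (n + 1 : ℝ)⌋ : ℤ) :=
        Int.measurable_floor.comp ((measurable_id.max measurable_const).mul_const _)
      exact (measurable_of_countable
        (fun k : ℤ => Z (((k : ℝ) + 1) / (n + 1 : ℝ)))).comp h1
    apply measurable_of_tendsto_metrizable hmeas
    rw [tendsto_pi_nhds]
    intro s
    set x := max s 0 with hx
    have hx0 : (0 : ℝ) ≤ x := le_max_right s 0
    have hnpos : ∀ n : ℕ, (0 : ℝ) < (n : ℝ) + 1 := fun n => by positivity
    have hlt : ∀ n : ℕ, x < ((⌊x * (n + 1 : ℝ)⌋ : ℝ) + 1) / (n + 1 : ℝ) := by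
      intro n
      rw [lt_div_iff₀ (hnpos n)]
      exact Int.lt_floor_add_one (x * ((n : ℝ) + 1))
    have hle : ∀ n : ℕ, ((⌊x * (n + 1 : ℝ)⌋ : ℝ) + 1) / (n + 1 : ℝ) ≤ x + 1 / ((n : ℝ) + 1) := by
      intro n
      rw [div_le_iff₀ (hnpos n)]
      have := Int.floor_le (x * ((n : ℝ) + 1))
      have h2 : (0 : ℝ) < (n : ℝ) + 1 := hnpos n
      field_simp
      nlinarith [this]
    have htend : Filter.Tendsto (fun n : ℕ => ((⌊x * (n + 1 : ℝ)⌋ : ℝ) + 1) / (n + 1 : ℝ))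
        Filter.atTop (nhds x) := by
      have hupper : Filter.Tendsto (fun n : ℕ => x + 1 / ((n : ℝ) + 1))
          Filter.atTop (nhds x) := by
        have : Filter.Tendsto (fun n : ℕ => 1 / ((n : ℝ) + 1)) Filter.atTop (nhds 0) :=
          tendsto_one_div_add_atTop_nhds_zero_nat
        have h := (tendsto_const_nhds (x := x) (f := Filter.atTop (α := ℕ))).add this
        simpa using h
      exact tendsto_of_tendsto_of_tendsto_of_le_of_le tendsto_const_nhds hupper
        (fun n => (hlt n).le) hle
    have hrc := (hZrc x hx0).tendsto
    refine hrc.comp ?_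
    rw [tendsto_nhdsWithin_iff]
    exact ⟨htend, Filter.Eventually.of_forall fun n => (hlt n).le⟩
  set A' : Set ℝ := {s : ℝ | Z (max s 0) = 0} with hA'
  have hA'meas : MeasurableSet A' := measurableSet_eq_fun hW measurable_const
  have hfin : ∀ u : ℝ, μ (Icc 0 u) ≠ ⊤ := by
    intro u
    have h1 : μ (Icc 0 u) ≤ μ (Ioc (-1) u) :=
      measure_mono (fun x hx => ⟨by linarith [hx.1], hx.2⟩)
    have h2 : μ (Ioc (-1) u) = ENNReal.ofReal (S u - S (-1)) :=
      StieltjesFunction.measure_Ioc S (-1) u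
    exact ne_top_of_le_ne_top (by rw [h2]; exact ENNReal.ofReal_ne_top) h1
  have hfinA : ∀ u : ℝ, μ (A' ∩ Icc 0 u) ≠ ⊤ := fun u =>
    ne_top_of_le_ne_top (hfin u) (measure_mono inter_subset_right)
  set ℓ : ℝ → ℝ := fun u => (μ (A' ∩ Icc 0 u)).toReal with hℓ
  have hint : ∀ u : ℝ, 0 ≤ u →
      (∫ s in Icc (0 : ℝ) u, ({s : ℝ | Z s = 0}).indicator (fun _ => (1 : ℝ)) s ∂μ) = ℓ u := by
    intro u hu
    have hcongr : EqOn (({s : ℝ | Z s = 0}).indicator (fun _ => (1 : ℝ)))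
        (A'.indicator (fun _ => (1 : ℝ))) (Icc 0 u) := by
      intro s hs
      have hm : max s 0 = s := max_eq_left hs.1
      simp only [indicator_apply, mem_setOf_eq, hA', hm]
    rw [setIntegral_congr_fun measurableSet_Icc hcongr, setIntegral_indicator hA'meas,
      setIntegral_const, inter_comm, smul_eq_mul, mul_one]
    rfl
  have hZeq' : ∀ u : ℝ, 0 ≤ u → Z u = z + Y u + ℓ u := by
    intro u hu
    rw [hZeq u hu, hint u hu]
  have hℓmono : ∀ u v : ℝ, u ≤ v → ℓ u ≤ ℓ v := by
    intro u v huv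
    exact ENNReal.toReal_mono (hfinA v)
      (measure_mono (inter_subset_inter_right _ (Icc_subset_Icc le_rfl huv)))
  have hℓnn : ∀ u : ℝ, 0 ≤ ℓ u := fun u => ENNReal.toReal_nonneg
  -- compactness facts for Y
  have hYc : ContinuousOn Y (Icc 0 t) := by
    have h1 : ContinuousOn (fun s : ℝ => s - X s) (Icc 0 t) :=
      continuousOn_id.sub (hcont.mono (fun x hx => hx.1))
    exact h1.congr (fun s _ => hY s)
  have hKcomp : IsCompact (Y '' Icc 0 t) := isCompact_Icc.image_of_continuousOn hYc
  have hKne : (Y '' Icc 0 t).Nonempty := (nonempty_Icc.2 ht).image Y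
  have hKbdd : BddBelow (Y '' Icc 0 t) := hKcomp.bddBelow
  set m := sInf (Y '' Icc 0 t) with hm
  -- lower bound : max 0 (-(m+z)) ≤ ℓ t
  have hlow : max 0 (-(m + z)) ≤ ℓ t := by
    obtain ⟨s₀, hs₀, hYs₀⟩ := hKcomp.sInf_mem hKne
    have h1 := hZnn s₀ hs₀.1
    have h2 := hZeq' s₀ hs₀.1
    have h3 := hℓmono s₀ t hs₀.2
    apply max_le (hℓnn t)
    rw [← hm] at hYs₀
    linarith [hYs₀ ▸ h2]
  -- upper bound : ℓ t ≤ max 0 (-(m+z))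
  have hupp : ℓ t ≤ max 0 (-(m + z)) := by
    by_cases hE : (A' ∩ Icc 0 t).Nonempty
    · set sstar := sSup (A' ∩ Icc 0 t) with hsstar
      have hbddE : BddAbove (A' ∩ Icc 0 t) := (bddAbove_Icc).mono inter_subset_right
      obtain ⟨u0, hu0⟩ := hE
      have hsstar_mem : sstar ∈ Icc (0 : ℝ) t :=
        ⟨le_trans hu0.2.1 (le_csSup hbddE hu0), csSup_le ⟨u0, hu0⟩ (fun u hu => hu.2.2)⟩
      have key : ∀ ε : ℝ, 0 < ε → ℓ t ≤ max 0 (-(m + z)) + ε := by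
        intro ε hε
        obtain ⟨s, hsE, hs⟩ := exists_lt_of_lt_csSup ⟨u0, hu0⟩
          (show sstar - ε < sstar by linarith)
        have hs_le : s ≤ sstar := le_csSup hbddE hsE
        have hs0 : (0 : ℝ) ≤ s := hsE.2.1
        have hsub : A' ∩ Icc 0 t ⊆ (A' ∩ Icc 0 s) ∪ Ioc s sstar := by
          intro u hu
          rcases le_or_gt u s with h | h
          · exact Or.inl ⟨hu.1, hu.2.1, h⟩
          · exact Or.inr ⟨h, le_csSup hbddE hu⟩
        have h1 : μ (A' ∩ Icc 0 t) ≤ μ (A' ∩ Icc 0 s) + μ (Ioc s sstar) :=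
          le_trans (measure_mono hsub) (measure_union_le _ _)
        have hXIoc : μ (Ioc s sstar) = ENNReal.ofReal (X sstar - X s) := by
          have := StieltjesFunction.measure_Ioc S s sstar
          rw [hμ, this]
          have h1' : S sstar = X sstar := by
            show X (max sstar 0) = X sstar
            rw [max_eq_left hsstar_mem.1]
          have h2' : S s = X s := by
            show X (max s 0) = X s
            rw [max_eq_left hs0]
          rw [h1', h2']
        have hXmono : X s ≤ X sstar := hmono hs0 hs_le
        have h2 : ℓ t ≤ ℓ s + (X sstar - X s) := by
          calc ℓ t = (μ (A' ∩ Icc 0 t)).toReal := rfl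
            _ ≤ (μ (A' ∩ Icc 0 s) + μ (Ioc s sstar)).toReal := by
                apply ENNReal.toReal_mono _ h1
                exact ENNReal.add_ne_top.2 ⟨hfinA s, by rw [hXIoc]; exact ENNReal.ofReal_ne_top⟩
            _ ≤ (μ (A' ∩ Icc 0 s)).toReal + (μ (Ioc s sstar)).toReal :=
                ENNReal.toReal_add_le
            _ = ℓ s + (X sstar - X s) := by
                rw [hXIoc, ENNReal.toReal_ofReal (by linarith)]
        have hZs : Z s = 0 := by
          have h3 := hsE.1
          simp only [hA', mem_setOf_eq, max_eq_left hs0] at h3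
          exact h3
        have hℓs : ℓ s = -z - Y s := by
          have h4 := hZeq' s hs0
          rw [hZs] at h4
          linarith
        have hYmem : m ≤ Y sstar := csInf_le hKbdd ⟨sstar, hsstar_mem, rfl⟩
        have hYs : Y s = s - X s := hY s
        have hYsstar : Y sstar = sstar - X sstar := hY sstar
        have hfinal : ℓ t ≤ -(m + z) + ε := by
          have : -z - Y sstar ≤ -(m + z) := by linarith
          nlinarith [h2, hℓs, hs, hs_le]
        linarith [le_max_right (0 : ℝ) (-(m + z))]
      by_contra hcon
      push_neg at hcon
      have := key ((ℓ t - max 0 (-(m + z))) / 2) (by linarith)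
      linarith
    · have h0 : μ (A' ∩ Icc 0 t) = 0 := by
        rw [not_nonempty_iff_eq_empty.1 hE]
        exact measure_empty
      have : ℓ t = 0 := by rw [hℓ]; simp [h0]
      rw [this]
      exact le_max_left _ _
  have : ℓ t = max 0 (-(m + z)) := le_antisymm hupp hlow
  rw [hZeq' t ht, this]
end

section
/- Let X : [0,∞) → Ω → ℝ be a process on a probability space (Ω, 𝓕, P) with: X(0) = 0 a.s.; independent increments (for every 0 ≤ t₀ ≤ t₁ ≤ ⋯ ≤ tₙ the random variables X(t₁)−X(t₀), …, X(tₙ)−X(tₙ₋₁) are independent); stationary increments (for all 0 ≤ s ≤ t, X(t)−X(s) has the same law as X(t−s)); almost surely right-continuous sample paths; and almost surely nondecreasing sample paths. Let Y(t) = t − X(t) and Z(t) = Y(t) + max(0, −inf_{s∈[0,t]} Y(s)). Then for each fixed t > 0, the random variable Z(t) is identically distributed with sup_{s∈[0,t]} Y(s) = sup_{s∈[0,t]} (s − X(s)). -/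
open Set MeasureTheory ProbabilityTheory
variable {Ω : Type*} [MeasurableSpace Ω]

/-- Independent increments: for every finite nondecreasing sequence of times in
`[0,∞)` the successive increments are independent. -/
def HasIndepIncrements (X : ℝ → Ω → ℝ) (P : Measure Ω) : Prop :=
  ∀ n : ℕ, ∀ t : Fin (n + 1) → ℝ, Monotone t → 0 ≤ t 0 →
    iIndepFun (m := fun _ => Real.measurableSpace)
      (fun i : Fin n => fun ω => X (t i.succ) ω - X (t i.castSucc) ω) P

/-- Stationary increments: `X t - X s` has the same law as `X (t - s)`. -/
def HasStatIncrements (X : ℝ → Ω → ℝ) (P : Measure Ω) : Prop :=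
  ∀ s t : ℝ, 0 ≤ s → s ≤ t →
    IdentDistrib (fun ω => X t ω - X s ω) (X (t - s)) P P

/-- A.s. right-continuous sample paths on `[0,∞)`. -/
def HasRCPaths (X : ℝ → Ω → ℝ) (P : Measure Ω) : Prop :=
  ∀ᵐ ω ∂P, ∀ t : ℝ, 0 ≤ t → ContinuousWithinAt (fun s => X s ω) (Ici t) t

/-- Lévy process: `X 0 = 0` a.s., independent and stationary increments,
a.s. right-continuous sample paths. -/
def IsLevyProcess (X : ℝ → Ω → ℝ) (P : Measure Ω) : Prop :=
  (∀ᵐ ω ∂P, X 0 ω = 0) ∧ _root_.HasIndepIncrements X P ∧ HasStatIncrements X P ∧ HasRCPaths X P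

/-- Spectrally positive: a.s. all jumps are nonnegative, i.e. every left limit
of the path lies below the current value. -/
def IsSpectrallyPositive (X : ℝ → Ω → ℝ) (P : Measure Ω) : Prop :=
  ∀ᵐ ω ∂P, ∀ s : ℝ, 0 < s → ∀ L : ℝ,
    Filter.Tendsto (fun r => X r ω) (nhdsWithin s (Iio s)) (nhds L) → L ≤ X s ω

private lemma aux_aem_pi {P : Measure Ω} {k : ℕ} (g : Fin k → Ω → ℝ)
    (hg : ∀ i, AEMeasurable (g i) P) : AEMeasurable (fun ω (i : Fin k) => g i ω) P := by
  refine ⟨fun ω i => (hg i).mk _ ω, measurable_pi_lambda _ fun i => (hg i).measurable_mk, ?_⟩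
  filter_upwards [MeasureTheory.ae_all_iff.mpr fun i => (hg i).ae_eq_mk] with ω h
  funext i; exact h i

private lemma aux_map_eq_pi (P : Measure Ω) [IsProbabilityMeasure P]
    {k : ℕ} (g : Fin k → Ω → ℝ) (hg : ∀ i, AEMeasurable (g i) P)
    (hprod : ∀ sets : Fin k → Set ℝ, (∀ i, MeasurableSet (sets i)) →
      P (⋂ i, g i ⁻¹' sets i) = ∏ i, P (g i ⁻¹' sets i)) :
    P.map (fun ω i => g i ω) = Measure.pi (fun i => P.map (g i)) := by
  haveI : ∀ i, IsProbabilityMeasure (P.map (g i)) := fun i => Measure.isProbabilityMeasure_map (hg i)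
  refine (Measure.pi_eq fun s hs => ?_).symm
  rw [Measure.map_apply_of_aemeasurable (aux_aem_pi g hg) (MeasurableSet.univ_pi hs)]
  have hpre : (fun ω (i : Fin k) => g i ω) ⁻¹' (Set.univ.pi s) = ⋂ i, g i ⁻¹' s i := by
    ext ω; simp [Set.mem_pi]
  rw [hpre, hprod s hs]
  exact Finset.prod_congr rfl fun i _ =>
    (Measure.map_apply_of_aemeasurable (hg i) (hs i)).symm

private lemma aux_core (P : Measure Ω) [IsProbabilityMeasure P]
    (X : ℝ → Ω → ℝ) (hInd : _root_.HasIndepIncrements X P) (hStat : HasStatIncrements X P)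
    (t : ℝ) (ht : 0 ≤ t) {k : ℕ} (v : Fin k → ℝ) (hv : Monotone v)
    (hv0 : ∀ j, 0 ≤ v j) (hvt : ∀ j, v j ≤ t) :
    P.map (fun ω (j : Fin k) => X t ω - X (t - v j) ω)
      = P.map (fun ω (j : Fin k) => X (v j) ω - X 0 ω) := by
  have hXm : ∀ r : ℝ, 0 ≤ r → AEMeasurable (X r) P := fun r hr => by
    have h := (hStat 0 r le_rfl hr).aemeasurable_snd
    simpa using h
  classical
  set u : Fin (k + 1) → ℝ := Fin.cons 0 v with hu
  have hus : ∀ j : Fin k, u j.succ = v j := fun j => by simp [hu]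
  have hu0 : u 0 = 0 := by simp [hu]
  have hunn : ∀ i, 0 ≤ u i := by
    intro i
    rcases Fin.eq_zero_or_eq_succ i with rfl | ⟨j, rfl⟩
    · simp [hu0]
    · rw [hus]; exact hv0 j
  have hut : ∀ i, u i ≤ t := by
    intro i
    rcases Fin.eq_zero_or_eq_succ i with rfl | ⟨j, rfl⟩
    · simpa [hu0] using ht
    · rw [hus]; exact hvt j
  have humono : Monotone u := by
    intro i j hij
    rcases Fin.eq_zero_or_eq_succ i with rfl | ⟨i', rfl⟩
    · rw [hu0]; exact hunn j
    · rcases Fin.eq_zero_or_eq_succ j with rfl | ⟨j', rfl⟩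
      · exact absurd (Fin.le_zero_iff.mp hij) (Fin.succ_ne_zero i')
      · rw [hus, hus]; exact hv (by exact_mod_cast Fin.succ_le_succ_iff.mp hij)
  set w : Fin (k + 1) → ℝ := fun i => t - u i.rev with hw
  have hwmono : Monotone w := by
    intro i j hij
    have : u j.rev ≤ u i.rev := humono (Fin.rev_le_rev.mpr hij)
    simp only [hw]; linarith
  have hw0 : 0 ≤ w 0 := by simp only [hw]; linarith [hut (0 : Fin (k+1)).rev]
  set V : Fin k → Ω → ℝ := fun i ω => X (u i.succ) ω - X (u i.castSucc) ω with hV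
  set J : Fin k → Ω → ℝ := fun i ω => X (t - u i.castSucc) ω - X (t - u i.succ) ω with hJ
  set W : Fin k → Ω → ℝ := fun i ω => X (w i.succ) ω - X (w i.castSucc) ω with hW
  have hJW : ∀ i : Fin k, J i = W i.rev := by
    intro i
    funext ω
    simp only [hJ, hW, hw, Fin.rev_succ, Fin.rev_castSucc, Fin.rev_rev]
  have hIndV := hInd k u humono (by rw [hu0])
  have hIndW := hInd k w hwmono hw0
  have hVm : ∀ i, AEMeasurable (V i) P := fun i =>
    ((hXm _ (hunn i.succ)).sub (hXm _ (hunn i.castSucc)))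
  have hJm : ∀ i, AEMeasurable (J i) P := fun i =>
    ((hXm _ (by linarith [hut i.castSucc])).sub (hXm _ (by linarith [hut i.succ])))
  have hcs : ∀ i : Fin k, u i.castSucc ≤ u i.succ := fun i => humono (Fin.castSucc_le_succ i)
  have mV : ∀ i, P.map (V i) = P.map (X (u i.succ - u i.castSucc)) := fun i =>
    (hStat (u i.castSucc) (u i.succ) (hunn _) (hcs i)).map_eq
  have mJ : ∀ i, P.map (J i) = P.map (X (u i.succ - u i.castSucc)) := by
    intro i
    have h := (hStat (t - u i.succ) (t - u i.castSucc)
      (by linarith [hut i.succ]) (by linarith [hcs i])).map_eq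
    rw [show (t - u i.castSucc) - (t - u i.succ) = u i.succ - u i.castSucc by ring] at h
    exact h
  have hprodV : ∀ sets : Fin k → Set ℝ, (∀ i, MeasurableSet (sets i)) →
      P (⋂ i, V i ⁻¹' sets i) = ∏ i, P (V i ⁻¹' sets i) := by
    intro sets hsets
    have h := (iIndepFun_iff_measure_inter_preimage_eq_mul.mp hIndV) Finset.univ
      (sets := sets) (fun i _ => hsets i)
    simpa using h
  have hprodJ : ∀ sets : Fin k → Set ℝ, (∀ i, MeasurableSet (sets i)) →
      P (⋂ i, J i ⁻¹' sets i) = ∏ i, P (J i ⁻¹' sets i) := by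
    intro sets hsets
    have h := (iIndepFun_iff_measure_inter_preimage_eq_mul.mp hIndW) Finset.univ
      (sets := fun i => sets i.rev) (fun i _ => hsets _)
    simp only [Set.mem_univ, Set.iInter_true, Finset.mem_univ, Set.iInter_iInter_eq_left] at h
    have e1 : (⋂ i, W i ⁻¹' sets i.rev) = ⋂ i, J i ⁻¹' sets i := by
      rw [← Function.Surjective.iInter_comp (Fin.rev_surjective) (fun i => J i ⁻¹' sets i)]
      exact Set.iInter_congr fun i => by rw [hJW, Fin.rev_rev]
    have e2 : (∏ i, P (W i ⁻¹' sets i.rev)) = ∏ i, P (J i ⁻¹' sets i) := by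
      rw [← Equiv.prod_comp (Equiv.mk Fin.rev Fin.rev Fin.rev_rev Fin.rev_rev)
        (fun i => P (J i ⁻¹' sets i))]
      exact Finset.prod_congr rfl fun i _ => by simp only [Equiv.coe_fn_mk, hJW, Fin.rev_rev]
    calc P (⋂ i, J i ⁻¹' sets i) = P (⋂ i, W i ⁻¹' sets i.rev) := by rw [e1]
    _ = ∏ i, P (W i ⁻¹' sets i.rev) := by
        convert h using 2
    _ = ∏ i, P (J i ⁻¹' sets i) := e2
  have hmapV := aux_map_eq_pi P V hVm hprodV
  have hmapJ := aux_map_eq_pi P J hJm hprodJ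
  have hVJ : P.map (fun ω i => J i ω) = P.map (fun ω i => V i ω) := by
    rw [hmapV, hmapJ]
    congr 1
    funext i
    rw [mV, mJ]
  -- the cumulative-sum map
  set L : (Fin k → ℝ) → Fin k → ℝ := fun x j =>
    ∑ m ∈ Finset.range (j.1 + 1), x ⟨m % k, Nat.mod_lt m j.pos⟩ with hL
  have hLm : Measurable L :=
    measurable_pi_lambda _ fun j => Finset.measurable_sum _ fun m _ => measurable_pi_apply _
  have claimV : ∀ ω, L (fun i => V i ω) = fun j => X (v j) ω - X 0 ω := by
    intro ω
    funext j
    have hjk : (j : ℕ) < k := j.2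
    have e : ∀ m ∈ Finset.range (j.1 + 1),
        V ⟨m % k, Nat.mod_lt m j.pos⟩ ω =
          (fun m : ℕ => X (u ⟨min m k, by omega⟩) ω) (m + 1)
            - (fun m : ℕ => X (u ⟨min m k, by omega⟩) ω) m := by
      intro m hm
      have hmj : m ≤ (j : ℕ) := Nat.lt_succ_iff.mp (Finset.mem_range.mp hm)
      have hmk : m < k := lt_of_le_of_lt hmj hjk
      have h1 : m % k = m := Nat.mod_eq_of_lt hmk
      simp only [hV]
      congr 2
      · congr 1; apply Fin.ext; simp [h1, Nat.min_eq_left (by omega : m + 1 ≤ k)]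
      · congr 1; apply Fin.ext; simp [h1, Nat.min_eq_left (by omega : m ≤ k)]
    show (∑ m ∈ Finset.range (j.1 + 1), V ⟨m % k, Nat.mod_lt m j.pos⟩ ω) = X (v j) ω - X 0 ω
    rw [Finset.sum_congr rfl e, Finset.sum_range_sub (fun m : ℕ => X (u ⟨min m k, by omega⟩) ω)]
    have h1 : (⟨min (j.1 + 1) k, by omega⟩ : Fin (k+1)) = j.succ := by
      apply Fin.ext; simp [Nat.min_eq_left (by omega : j.1 + 1 ≤ k)]
    have h2 : (⟨min 0 k, by omega⟩ : Fin (k+1)) = 0 := by apply Fin.ext; simp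
    rw [h1, h2, hus, hu0]
  have claimJ : ∀ ω, L (fun i => J i ω) = fun j => X t ω - X (t - v j) ω := by
    intro ω
    funext j
    have hjk : (j : ℕ) < k := j.2
    have e : ∀ m ∈ Finset.range (j.1 + 1),
        J ⟨m % k, Nat.mod_lt m j.pos⟩ ω =
          (fun m : ℕ => X (t - u ⟨min m k, by omega⟩) ω) m
            - (fun m : ℕ => X (t - u ⟨min m k, by omega⟩) ω) (m + 1) := by
      intro m hm
      have hmj : m ≤ (j : ℕ) := Nat.lt_succ_iff.mp (Finset.mem_range.mp hm)
      have hmk : m < k := lt_of_le_of_lt hmj hjk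
      have h1 : m % k = m := Nat.mod_eq_of_lt hmk
      simp only [hJ]
      congr 3
      · congr 1; apply Fin.ext; simp [h1, Nat.min_eq_left (by omega : m ≤ k)]
      · congr 1; apply Fin.ext; simp [h1, Nat.min_eq_left (by omega : m + 1 ≤ k)]
    show (∑ m ∈ Finset.range (j.1 + 1), J ⟨m % k, Nat.mod_lt m j.pos⟩ ω)
        = X t ω - X (t - v j) ω
    rw [Finset.sum_congr rfl e,
      Finset.sum_range_sub' (fun m : ℕ => X (t - u ⟨min m k, by omega⟩) ω)]
    have h1 : (⟨min (j.1 + 1) k, by omega⟩ : Fin (k+1)) = j.succ := by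
      apply Fin.ext; simp [Nat.min_eq_left (by omega : j.1 + 1 ≤ k)]
    have h2 : (⟨min 0 k, by omega⟩ : Fin (k+1)) = 0 := by apply Fin.ext; simp
    rw [h1, h2, hus, hu0, sub_zero]
  have hVvec : AEMeasurable (fun ω (i : Fin k) => V i ω) P := aux_aem_pi V hVm
  have hJvec : AEMeasurable (fun ω (i : Fin k) => J i ω) P := aux_aem_pi J hJm
  calc P.map (fun ω (j : Fin k) => X t ω - X (t - v j) ω)
      = P.map (L ∘ fun ω i => J i ω) := by
        congr 1; funext ω; exact (claimJ ω).symm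
    _ = (P.map (fun ω i => J i ω)).map L :=
        (AEMeasurable.map_map_of_aemeasurable hLm.aemeasurable hJvec).symm
    _ = (P.map (fun ω i => V i ω)).map L := by rw [hVJ]
    _ = P.map (L ∘ fun ω i => V i ω) :=
        AEMeasurable.map_map_of_aemeasurable hLm.aemeasurable hVvec
    _ = P.map (fun ω (j : Fin k) => X (v j) ω - X 0 ω) := by
        congr 1; funext ω; exact claimV ω


private lemma aux_sup'_reindex {α β : Type*} [LinearOrder α] [SemilatticeSup β]
    (F : Finset α) (hF : F.Nonempty) {k : ℕ} (hk : Nonempty (Fin k))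
    (g : Fin k → α) (hmem : ∀ j, g j ∈ F) (hsurj : ∀ s ∈ F, ∃ j, g j = s) (f : α → β) :
    F.sup' hF f = (Finset.univ.sup' Finset.univ_nonempty fun j => f (g j)) := by
  apply le_antisymm
  · refine Finset.sup'_le _ _ fun b hb => ?_
    obtain ⟨j, rfl⟩ := hsurj b hb
    exact Finset.le_sup' (fun j => f (g j)) (Finset.mem_univ j)
  · exact Finset.sup'_le _ _ fun j _ => Finset.le_sup' f (hmem j)

private lemma aux_finset_ident (P : Measure Ω) [IsProbabilityMeasure P]
    (X : ℝ → Ω → ℝ) (hInd : _root_.HasIndepIncrements X P) (hStat : HasStatIncrements X P)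
    (h0 : ∀ᵐ ω ∂P, X 0 ω = 0) (t : ℝ) (ht : 0 ≤ t)
    (F : Finset ℝ) (hFne : F.Nonempty) (hFsub : ↑F ⊆ Icc (0:ℝ) t) :
    IdentDistrib (fun ω => F.sup' hFne fun s => (t - X t ω) - (s - X s ω))
      (fun ω => F.sup' hFne fun s => (t - s) - X (t - s) ω) P P := by
  classical
  have hXm : ∀ r : ℝ, 0 ≤ r → AEMeasurable (X r) P := fun r hr => by
    have h := (hStat 0 r le_rfl hr).aemeasurable_snd
    simpa using h
  set k := F.card with hkcard
  have hk : Nonempty (Fin k) := ⟨⟨0, Finset.card_pos.mpr hFne⟩⟩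
  set e := F.orderIsoOfFin rfl with he
  set g : Fin k → ℝ := fun j => (e j.rev : ℝ) with hg
  have hmem : ∀ j, g j ∈ F := fun j => Finset.coe_mem _
  have hsurj : ∀ s ∈ F, ∃ j, g j = s := fun s hs =>
    ⟨(e.symm ⟨s, hs⟩).rev, by simp [hg, Fin.rev_rev]⟩
  have hgIcc : ∀ j, g j ∈ Icc (0:ℝ) t := fun j => hFsub (hmem j)
  set v : Fin k → ℝ := fun j => t - g j with hv
  have hvmono : Monotone v := by
    intro i j hij
    have h1 : e i.rev ≤ e j.rev → False → True := fun _ _ => trivial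
    have : e j.rev ≤ e i.rev := e.monotone (Fin.rev_le_rev.mpr hij)
    have : g j ≤ g i := by exact_mod_cast this
    simp only [hv]; linarith
  have hv0 : ∀ j, 0 ≤ v j := fun j => by have := (hgIcc j).2; simp only [hv]; linarith
  have hvt : ∀ j, v j ≤ t := fun j => by have := (hgIcc j).1; simp only [hv]; linarith
  have hgv : ∀ j, g j = t - v j := fun j => by simp only [hv]; ring
  set Φ : (Fin k → ℝ) → ℝ :=
    fun x => Finset.univ.sup' Finset.univ_nonempty fun j => v j - x j with hΦ
  have hΦm : Measurable Φ := by
    have hΦ2 : Φ = Finset.univ.sup' Finset.univ_nonempty (fun j (x : Fin k → ℝ) => v j - x j) := by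
      funext x; rw [Finset.sup'_apply]
    rw [hΦ2]
    exact Finset.measurable_sup' _ fun j _ => measurable_const.sub (measurable_pi_apply j)
  set A : Ω → Fin k → ℝ := fun ω j => X t ω - X (t - v j) ω with hA
  set B : Ω → Fin k → ℝ := fun ω j => X (v j) ω - X 0 ω with hB
  have hAm : AEMeasurable A P := aux_aem_pi _
    (fun j => (hXm t ht).sub (hXm _ (by have := hvt j; linarith)))
  have hBm : AEMeasurable B P := aux_aem_pi _
    (fun j => (hXm _ (hv0 j)).sub (hXm 0 le_rfl))
  have hAB : IdentDistrib A B P P :=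
    ⟨hAm, hBm, aux_core P X hInd hStat t ht v hvmono hv0 hvt⟩
  have hI := hAB.comp hΦm
  have hLeq : (fun ω => F.sup' hFne fun s => (t - X t ω) - (s - X s ω)) = Φ ∘ A := by
    funext ω
    rw [aux_sup'_reindex F hFne hk g hmem hsurj]
    simp only [hΦ, hA, Function.comp_apply]
    refine Finset.sup'_congr _ rfl fun j _ => ?_
    rw [hgv j]; ring
  have hReq : (fun ω => F.sup' hFne fun s => (t - s) - X (t - s) ω) =ᵐ[P] Φ ∘ B := by
    filter_upwards [h0] with ω h0ω
    rw [aux_sup'_reindex F hFne hk g hmem hsurj]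
    simp only [hΦ, hB, Function.comp_apply]
    refine Finset.sup'_congr _ rfl fun j _ => ?_
    rw [hgv j, h0ω]; ring
  exact ⟨hLeq ▸ hI.aemeasurable_fst, hI.aemeasurable_snd.congr hReq.symm,
    by rw [hLeq, Measure.map_congr hReq]; exact hI.map_eq⟩

/-- distributional identity (8) of Proposition 2.
For a Lévy process `X` with a.s. nondecreasing sample paths, net supply
`Y t = t - X t`, the inventory level started from `0`,
`Z t = Y t + max 0 (-(inf_{s ∈ [0,t]} Y s))`, has for each fixed `t > 0` the
same distribution as `sup_{s ∈ [0,t]} (s - X s)`. -/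
theorem stmt_8 (P : Measure Ω) [IsProbabilityMeasure P]
    (X : ℝ → Ω → ℝ) (hLevy : IsLevyProcess X P)
    (hmono : ∀ᵐ ω ∂P, ∀ ⦃s t : ℝ⦄, 0 ≤ s → s ≤ t → X s ω ≤ X t ω)
    (Y : ℝ → Ω → ℝ) (hY : ∀ t ω, Y t ω = t - X t ω)
    (Z : ℝ → Ω → ℝ)
    (hZ : ∀ t ω, Z t ω = Y t ω + max 0 (-(sInf ((fun s => Y s ω) '' Icc (0 : ℝ) t)))) :
    ∀ t : ℝ, 0 < t →
      IdentDistrib (Z t)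
        (fun ω => sSup ((fun s => s - X s ω) '' Icc (0 : ℝ) t)) P P := by
  classical
  intro t ht
  obtain ⟨h0, hInd, hStat, hRC⟩ := hLevy
  -- countable, dense, reflection-symmetric subset of [0, t]
  set D : Set ℝ := {x | x ∈ Icc (0:ℝ) t ∧ ∃ q : ℚ, x = (q:ℝ) ∨ x = t - q} with hD
  have hDsub : D ⊆ Icc (0:ℝ) t := fun x hx => hx.1
  have hDt : t ∈ D := ⟨⟨le_of_lt ht, le_rfl⟩, 0, Or.inr (by simp)⟩
  have hDsymm : ∀ x ∈ D, t - x ∈ D := by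
    rintro x ⟨⟨h1, h2⟩, q, hq | hq⟩
    · exact ⟨⟨by linarith, by linarith⟩, q, Or.inr (by rw [hq])⟩
    · exact ⟨⟨by linarith, by linarith⟩, q, Or.inl (by rw [hq]; ring)⟩
  have hDcount : D.Countable := by
    have hsub : D ⊆ (Set.range (fun q : ℚ => (q:ℝ))) ∪ Set.range (fun q : ℚ => t - q) := by
      rintro x ⟨-, q, hq | hq⟩
      · exact Or.inl ⟨q, hq.symm⟩
      · exact Or.inr ⟨q, hq.symm⟩
    exact Set.Countable.mono hsub ((Set.countable_range _).union (Set.countable_range _))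
  have hDdense : ∀ s : ℝ, 0 ≤ s → s < t → ∀ δ : ℝ, 0 < δ →
      ∃ r ∈ D, s < r ∧ r < s + δ ∧ r ≤ t := by
    intro s hs hst δ hδ
    obtain ⟨q, hq1, hq2⟩ := exists_rat_btwn (show s < min (s + δ) t from lt_min (by linarith) hst)
    rw [lt_min_iff] at hq2
    exact ⟨q, ⟨⟨le_of_lt (lt_of_le_of_lt hs hq1), le_of_lt hq2.2⟩, q, Or.inl rfl⟩,
      hq1, hq2.1, le_of_lt hq2.2⟩
  obtain ⟨d, hd⟩ := hDcount.exists_eq_range ⟨t, hDt⟩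
  -- finite stages exhausting `D`
  set F : ℕ → Finset ℝ := fun n => (Finset.range (n+1)).image d with hF
  have hFne : ∀ n, (F n).Nonempty := fun n =>
    ⟨d 0, Finset.mem_image_of_mem d (Finset.mem_range.mpr (Nat.succ_pos n))⟩
  have hdD : ∀ m, d m ∈ D := fun m => by rw [hd]; exact ⟨m, rfl⟩
  have hFD : ∀ n, ∀ x ∈ F n, x ∈ D := fun n x hx => by
    obtain ⟨m, -, rfl⟩ := Finset.mem_image.mp hx; exact hdD m
  have hFsub : ∀ n, ↑(F n) ⊆ Icc (0:ℝ) t := fun n x hx => hDsub (hFD n x hx)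
  have hFmono : ∀ {n m : ℕ}, n ≤ m → F n ⊆ F m := fun {n m} h =>
    Finset.image_subset_image (Finset.range_subset_range.mpr (by omega))
  have hFexh : ∀ x ∈ D, ∃ n, x ∈ F n := by
    rw [hd]; rintro x ⟨m, rfl⟩
    exact ⟨m, Finset.mem_image_of_mem d (Finset.mem_range.mpr (by omega))⟩
  -- approximating sequences
  set f : ℕ → Ω → ℝ := fun n ω => (F n).sup' (hFne n) fun s => (t - X t ω) - (s - X s ω) with hf
  set g : ℕ → Ω → ℝ := fun n ω => (F n).sup' (hFne n) fun s => (t - s) - X (t - s) ω with hg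
  set S : Ω → ℝ := fun ω => sSup ((fun s => s - X s ω) '' Icc (0:ℝ) t) with hS
  have hIdent : ∀ n, IdentDistrib (f n) (g n) P P := fun n =>
    aux_finset_ident P X hInd hStat h0 t (le_of_lt ht) (F n) (hFne n) (hFsub n)
  have hfmono : ∀ ω, Monotone fun n => f n ω := fun ω n m hnm => by
    simp only [hf]
    exact Finset.sup'_mono _ (hFmono hnm) (hFne n)
  have hgmono : ∀ ω, Monotone fun n => g n ω := fun ω n m hnm => by
    simp only [hg]
    exact Finset.sup'_mono _ (hFmono hnm) (hFne n)
  -- pathwise characterization of the two suprema through the stages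
  have key : ∀ ω, X 0 ω = 0 → (∀ ⦃a b : ℝ⦄, 0 ≤ a → a ≤ b → X a ω ≤ X b ω) →
      (∀ r : ℝ, 0 ≤ r → ContinuousWithinAt (fun s' => X s' ω) (Ici r) r) →
      (∀ x : ℝ, (Z t ω ≤ x ↔ ∀ n, f n ω ≤ x)) ∧
      (∀ x : ℝ, (S ω ≤ x ↔ ∀ n, g n ω ≤ x)) := by
    intro ω h0ω hmω hrc
    have happrox : ∀ s ∈ Icc (0:ℝ) t, ∀ ε : ℝ, 0 < ε →
        ∃ r ∈ D, |(r - X r ω) - (s - X s ω)| < ε := by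
      intro s hs ε hε
      rcases eq_or_lt_of_le hs.2 with heq | hlt
      · exact ⟨t, hDt, by rw [heq]; simpa using hε⟩
      · have hc : ContinuousWithinAt (fun r => r - X r ω) (Ici s) s :=
          (continuousWithinAt_id).sub (hrc s hs.1)
        rw [Metric.continuousWithinAt_iff] at hc
        obtain ⟨δ, hδ, hball⟩ := hc ε hε
        obtain ⟨r, hrD, hr1, hr2, hr3⟩ := hDdense s hs.1 hlt δ hδ
        refine ⟨r, hrD, ?_⟩
        have hdist := hball (show r ∈ Ici s from le_of_lt hr1)
          (by rw [Real.dist_eq, abs_of_nonneg (by linarith)]; linarith)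
        rw [Real.dist_eq] at hdist
        exact hdist
    have hub : ∀ s ∈ Icc (0:ℝ) t, s - X s ω ≤ t := by
      intro s hs
      have h1 : X 0 ω ≤ X s ω := hmω le_rfl hs.1
      rw [h0ω] at h1; linarith [hs.2]
    have hlb : ∀ s ∈ Icc (0:ℝ) t, -X t ω ≤ s - X s ω := by
      intro s hs
      have h1 : X s ω ≤ X t ω := hmω hs.1 hs.2
      linarith [hs.1]
    have hne : ((fun s => s - X s ω) '' Icc (0:ℝ) t).Nonempty :=
      ⟨_, Set.mem_image_of_mem _ (Set.left_mem_Icc.mpr (le_of_lt ht))⟩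
    have hbddA : BddAbove ((fun s => s - X s ω) '' Icc (0:ℝ) t) := by
      refine ⟨t, ?_⟩; rintro _ ⟨s, hs, rfl⟩; exact hub s hs
    have hbddB : BddBelow ((fun s => s - X s ω) '' Icc (0:ℝ) t) := by
      refine ⟨-X t ω, ?_⟩; rintro _ ⟨s, hs, rfl⟩; exact hlb s hs
    have hDle : ∀ x : ℝ, (∀ r ∈ D, r - X r ω ≤ x) → ∀ s ∈ Icc (0:ℝ) t, s - X s ω ≤ x := by
      intro x h s hs
      by_contra hcon
      push_neg at hcon
      obtain ⟨r, hrD, habs⟩ := happrox s hs ((s - X s ω - x)/2) (by linarith)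
      have h2 := h r hrD
      rw [abs_lt] at habs
      linarith [habs.1]
    have hDge : ∀ c : ℝ, (∀ r ∈ D, c ≤ r - X r ω) → ∀ s ∈ Icc (0:ℝ) t, c ≤ s - X s ω := by
      intro c h s hs
      by_contra hcon
      push_neg at hcon
      obtain ⟨r, hrD, habs⟩ := happrox s hs ((c - (s - X s ω))/2) (by linarith)
      have h2 := h r hrD
      rw [abs_lt] at habs
      linarith [habs.2]
    constructor
    · -- the Z part
      intro x
      have hYfun : (fun s => Y s ω) = fun s => s - X s ω := funext fun s => hY s ω
      have hZω : Z t ω = (t - X t ω) - sInf ((fun s => s - X s ω) '' Icc (0:ℝ) t) := by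
        rw [hZ, hY, hYfun]
        have h1 : sInf ((fun s => s - X s ω) '' Icc (0:ℝ) t) ≤ 0 := by
          have h2 := csInf_le hbddB (Set.mem_image_of_mem (fun s => s - X s ω)
            (Set.left_mem_Icc.mpr (le_of_lt ht)))
          simpa [h0ω] using h2
        rw [max_eq_right (by linarith)]
        ring
      rw [hZω]
      constructor
      · intro hx n
        simp only [hf, Finset.sup'_le_iff]
        intro s hsF
        have h5 : sInf ((fun s => s - X s ω) '' Icc (0:ℝ) t) ≤ s - X s ω :=
          csInf_le hbddB (Set.mem_image_of_mem _ (hFsub n hsF))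
        linarith
      · intro h
        have h6 : ∀ b ∈ (fun s => s - X s ω) '' Icc (0:ℝ) t, (t - X t ω) - x ≤ b := by
          rintro _ ⟨s, hs, rfl⟩
          refine hDge ((t - X t ω) - x) (fun r hrD => ?_) s hs
          obtain ⟨n, hrF⟩ := hFexh r hrD
          have h7 := h n
          simp only [hf, Finset.sup'_le_iff] at h7
          have h8 := h7 r hrF
          linarith
        have h9 := le_csInf hne h6
        linarith
    · -- the S part
      intro x
      simp only [hS]
      rw [csSup_le_iff hbddA hne]
      constructor
      · intro h n
        simp only [hg, Finset.sup'_le_iff]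
        intro s hsF
        have htsI : t - s ∈ Icc (0:ℝ) t := hDsub (hDsymm s (hFD n s hsF))
        exact h _ (Set.mem_image_of_mem _ htsI)
      · intro h
        rintro _ ⟨s, hs, rfl⟩
        refine hDle x (fun r hrD => ?_) s hs
        obtain ⟨n, hrF⟩ := hFexh (t - r) (hDsymm r hrD)
        have h7 := h n
        simp only [hg, Finset.sup'_le_iff] at h7
        have h8 := h7 (t - r) hrF
        have h9 : t - (t - r) = r := by ring
        rw [h9] at h8
        exact h8
  have hkey : ∀ᵐ ω ∂P, (∀ x : ℝ, (Z t ω ≤ x ↔ ∀ n, f n ω ≤ x)) ∧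
      (∀ x : ℝ, (S ω ≤ x ↔ ∀ n, g n ω ≤ x)) := by
    filter_upwards [h0, hmono, hRC] with ω h1 h2 h3
    exact key ω h1 h2 h3
  have hflim : ∀ᵐ ω ∂P, Filter.Tendsto (fun n => f n ω) Filter.atTop (nhds (Z t ω)) := by
    filter_upwards [hkey] with ω hω
    have hub : ∀ n, f n ω ≤ Z t ω := (hω.1 (Z t ω)).mp le_rfl
    have hbdd : BddAbove (Set.range fun n => f n ω) := ⟨Z t ω, by rintro _ ⟨n, rfl⟩; exact hub n⟩
    have hlub : IsLUB (Set.range fun n => f n ω) (Z t ω) := by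
      constructor
      · rintro _ ⟨n, rfl⟩; exact hub n
      · intro b hb
        exact (hω.1 b).mpr fun n => hb (Set.mem_range_self n)
    have h10 := tendsto_atTop_ciSup (hfmono ω) hbdd
    rwa [hlub.ciSup_eq] at h10
  have hglim : ∀ᵐ ω ∂P, Filter.Tendsto (fun n => g n ω) Filter.atTop (nhds (S ω)) := by
    filter_upwards [hkey] with ω hω
    have hub : ∀ n, g n ω ≤ S ω := (hω.2 (S ω)).mp le_rfl
    have hbdd : BddAbove (Set.range fun n => g n ω) := ⟨S ω, by rintro _ ⟨n, rfl⟩; exact hub n⟩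
    have hlub : IsLUB (Set.range fun n => g n ω) (S ω) := by
      constructor
      · rintro _ ⟨n, rfl⟩; exact hub n
      · intro b hb
        exact (hω.2 b).mpr fun n => hb (Set.mem_range_self n)
    have h10 := tendsto_atTop_ciSup (hgmono ω) hbdd
    rwa [hlub.ciSup_eq] at h10
  have hfm : ∀ n, AEMeasurable (f n) P := fun n => (hIdent n).aemeasurable_fst
  have hgm : ∀ n, AEMeasurable (g n) P := fun n => (hIdent n).aemeasurable_snd
  have hZm : AEMeasurable (Z t) P :=
    aemeasurable_of_tendsto_metrizable_ae Filter.atTop hfm hflim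
  have hSm : AEMeasurable S P :=
    aemeasurable_of_tendsto_metrizable_ae Filter.atTop hgm hglim
  have hCDF : ∀ x : ℝ, P (Z t ⁻¹' Iic x) = P (S ⁻¹' Iic x) := by
    intro x
    have hAe : Z t ⁻¹' Iic x =ᵐ[P] ⋂ n, f n ⁻¹' Iic x := by
      rw [Filter.eventuallyEq_set]
      filter_upwards [hkey] with ω hω
      simp only [Set.mem_preimage, Set.mem_Iic, Set.mem_iInter]
      exact hω.1 x
    have hBe : S ⁻¹' Iic x =ᵐ[P] ⋂ n, g n ⁻¹' Iic x := by
      rw [Filter.eventuallyEq_set]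
      filter_upwards [hkey] with ω hω
      simp only [Set.mem_preimage, Set.mem_Iic, Set.mem_iInter]
      exact hω.2 x
    rw [measure_congr hAe, measure_congr hBe]
    rw [Antitone.measure_iInter
        (fun n m hnm ω hω => by
          simp only [Set.mem_preimage, Set.mem_Iic] at hω ⊢
          exact le_trans (hfmono ω hnm) hω)
        (fun n => (hfm n).nullMeasurable measurableSet_Iic)
        ⟨0, measure_ne_top P _⟩,
      Antitone.measure_iInter
        (fun n m hnm ω hω => by
          simp only [Set.mem_preimage, Set.mem_Iic] at hω ⊢
          exact le_trans (hgmono ω hnm) hω)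
        (fun n => (hgm n).nullMeasurable measurableSet_Iic)
        ⟨0, measure_ne_top P _⟩]
    refine iInf_congr fun n => ?_
    rw [← Measure.map_apply_of_aemeasurable (hfm n) measurableSet_Iic,
      ← Measure.map_apply_of_aemeasurable (hgm n) measurableSet_Iic, (hIdent n).map_eq]
  refine ⟨hZm, hSm, ?_⟩
  haveI h1 : IsProbabilityMeasure (P.map (Z t)) := Measure.isProbabilityMeasure_map hZm
  refine MeasureTheory.Measure.ext_of_Iic (P.map (Z t)) (P.map S) fun x => ?_
  rw [Measure.map_apply_of_aemeasurable hZm measurableSet_Iic,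
    Measure.map_apply_of_aemeasurable hSm measurableSet_Iic]
  exact hCDF x
end
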